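/- Let −1 < n < 1, write n = −1 + δ with δ > 0, let 0 < κ < 1, and let m be any minimizer for f_L(n). Set A = {x ∈ Ω : −1+κ ≤ m(x) ≤ 1−κ}. Then |A|·κ²·(1−κ/2)² ≤ F(n)·L^d. In particular, if κ ≤ 2 − √2 and 0 < δ ≤ 2, then |A| ≤ 2F(n)L^d/κ² ≤ 2δ²L^d/κ². -/

import Mathlib

open MeasureTheory Filter

noncomputable section

/-- The double-well potential `F(m) = (1/4)(m²-1)²`. -/
def Fpot (m : ℝ) : ℝ := (1/4) * (m^2 - 1)^2

/-- The fundamental domain `[0,L)^d` of the torus of side `L`. -/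
def box (d : ℕ) (L : ℝ) : Set (EuclideanSpace ℝ (Fin d)) :=
  {x | ∀ i, x i ∈ Set.Ico (0:ℝ) L}

/-- `L`-periodicity in each coordinate direction. -/
def PeriodicOn (d : ℕ) (L : ℝ) (m : EuclideanSpace ℝ (Fin d) → ℝ) : Prop :=
  ∀ (x : EuclideanSpace ℝ (Fin d)) (i : Fin d),
    m (x + L • EuclideanSpace.single i (1:ℝ)) = m x

/-- The Cahn--Hilliard free energy functional on the torus. -/
def FE (d : ℕ) (L : ℝ) (m : EuclideanSpace ℝ (Fin d) → ℝ) : ℝ :=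
  ∫ x in box d L, ((1/2) * ‖fderiv ℝ m x‖^2 + Fpot (m x))

/-- Admissible order parameter fields with mean `n`. -/
def Adm (d : ℕ) (L n : ℝ) (m : EuclideanSpace ℝ (Fin d) → ℝ) : Prop :=
  ContDiff ℝ 1 m ∧ PeriodicOn d L m ∧ (1/L^d) * (∫ x in box d L, m x) = n

/-- The minimal free energy `f_L(n)`. -/
def fL (d : ℕ) (L n : ℝ) : ℝ :=
  sInf {e | ∃ m, Adm d L n m ∧ FE d L m = e}

/-- A minimizer for `f_L(n)`. -/
def IsMinimizer (d : ℕ) (L n : ℝ) (m : EuclideanSpace ℝ (Fin d) → ℝ) : Prop :=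
  Adm d L n m ∧ FE d L m = fL d L n

/-- `σ_d`, the surface measure of the unit sphere in `ℝ^d`. -/
def sigma_d (d : ℕ) : ℝ :=
  d * (volume (Metric.ball (0 : EuclideanSpace ℝ (Fin d)) 1)).toReal

/-- The planar surface tension `S = 2^{3/2}/3`. -/
def Sconst : ℝ := (2:ℝ) ^ ((3:ℝ)/2) / 3

/-- The compressibility `χ = 1/2`. -/
def chiConst : ℝ := 1/2

/-- The equimolar radius `r_0`. -/
def r0 (d : ℕ) (L n : ℝ) : ℝ := ((d / (2 * sigma_d d)) * (n+1)) ^ ((1:ℝ)/d) * L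

/-- `|Γ_0| = σ_d r_0^{d-1}`. -/
def Gamma0 (d : ℕ) (L n : ℝ) : ℝ := sigma_d d * (r0 d L n)^(d-1)

/-- `C(n)`. -/
def Cn (d : ℕ) (L n : ℝ) : ℝ :=
  (sigma_d d / (2 * chiConst * Sconst)) * (2/(d:ℝ))^2 * ((r0 d L n)^(d+1) / L^d)

/-- `D(K)`. -/
def Dconst (d : ℕ) (K : ℝ) : ℝ :=
  (2 / (d * chiConst * Sconst)) * (sigma_d d / d) ^ (-(1:ℝ)/d) * (K/2) ^ (((d:ℝ)+1)/d)

/-- `K_star`. -/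
def Kstar (d : ℕ) : ℝ :=
  ((d:ℝ)+1) * (sigma_d d / d) ^ ((1:ℝ)/((d:ℝ)+1)) * (chiConst * Sconst / 2) ^ ((d:ℝ)/((d:ℝ)+1))

/-- Torus distance. -/
def torusDist (d : ℕ) (L : ℝ) (x y : EuclideanSpace ℝ (Fin d)) : ℝ :=
  ⨅ k : Fin d → ℤ, dist x (y + (show EuclideanSpace ℝ (Fin d) from WithLp.toLp 2 fun i => L * (k i : ℝ)))

/- ### Auxiliary lemmas -/

lemma Fpot_nonneg (t : ℝ) : 0 ≤ Fpot t := by unfold Fpot; positivity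

lemma box_eq_preimage (d : ℕ) (L : ℝ) :
    box d L = (MeasurableEquiv.toLp 2 (Fin d → ℝ)).symm ⁻¹'
      (Set.univ.pi fun _ : Fin d => Set.Ico (0:ℝ) L) := by
  ext x; simp [box, Set.mem_pi]

lemma box_measurableSet (d : ℕ) (L : ℝ) : MeasurableSet (box d L) := by
  rw [box_eq_preimage]
  exact (MeasurableEquiv.toLp 2 (Fin d → ℝ)).symm.measurable
    (MeasurableSet.univ_pi fun _ => measurableSet_Ico)

lemma volume_box (d : ℕ) (L : ℝ) (hL : 0 ≤ L) :
    volume (box d L) = ENNReal.ofReal L ^ d := by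
  have hmp := EuclideanSpace.volume_preserving_symm_measurableEquiv_toLp (Fin d)
  have hs : MeasurableSet (Set.univ.pi fun _ : Fin d => Set.Ico (0:ℝ) L) :=
    MeasurableSet.univ_pi fun _ => measurableSet_Ico
  rw [box_eq_preimage, hmp.measure_preimage hs.nullMeasurableSet, volume_pi_pi]
  simp [Real.volume_Ico]

lemma isCompact_closedBox (d : ℕ) (L : ℝ) :
    IsCompact {x : EuclideanSpace ℝ (Fin d) | ∀ i, x i ∈ Set.Icc (0:ℝ) L} := by
  have h := isCompact_univ_pi (fun _ : Fin d => isCompact_Icc (a := (0:ℝ)) (b := L))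
  have h2 := h.image (EuclideanSpace.equiv (Fin d) ℝ).symm.continuous
  convert h2 using 1
  rw [show ((EuclideanSpace.equiv (Fin d) ℝ).symm '' (Set.univ.pi fun _ => Set.Icc (0:ℝ) L))
      = ((EuclideanSpace.equiv (Fin d) ℝ) ⁻¹' (Set.univ.pi fun _ => Set.Icc (0:ℝ) L)) from
    Set.ext fun x => ⟨by rintro ⟨y, hy, rfl⟩; exact hy, fun hx => ⟨_, hx, rfl⟩⟩]
  ext x
  simp [Set.mem_pi, EuclideanSpace.equiv]
  constructor
  · intro hx; exact ⟨fun i => (hx i).1, fun i => (hx i).2⟩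
  · intro hx i; exact ⟨hx.1 i, hx.2 i⟩

lemma FE_nonneg (d : ℕ) (L : ℝ) (m : EuclideanSpace ℝ (Fin d) → ℝ) : 0 ≤ FE d L m := by
  apply setIntegral_nonneg (box_measurableSet d L)
  intro x _
  have := Fpot_nonneg (m x)
  positivity

lemma FE_const (d : ℕ) (L : ℝ) (hL : 0 ≤ L) (c : ℝ) :
    FE d L (fun _ => c) = Fpot c * L ^ d := by
  unfold FE
  simp only [fderiv_fun_const, Pi.zero_apply, norm_zero]
  rw [setIntegral_const, measureReal_def, volume_box d L hL]
  simp [ENNReal.toReal_pow, ENNReal.toReal_ofReal hL, mul_comm]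

set_option maxHeartbeats 1600000 in
/-- Lemma 3.4: for any minimizer `m` for `f_L(n)`, `n = -1 + δ`, the transition region
`A = {x : -1+κ ≤ m(x) ≤ 1-κ}` satisfies `|A| κ² (1-κ/2)² ≤ F(n) L^d`; in particular if
`κ ≤ 2 - √2` then `|A| ≤ 2F(n)L^d/κ² ≤ 2δ²L^d/κ²`. -/
theorem transition_region_small (d : ℕ) (hd : 2 ≤ d) (L : ℝ) (hL : 0 < L)
    (n δ κ : ℝ) (hn : n = -1 + δ) (hδ0 : 0 < δ) (hδ2 : δ ≤ 2) (hn1 : n < 1)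
    (hκ0 : 0 < κ) (hκ1 : κ < 1)
    (m : EuclideanSpace ℝ (Fin d) → ℝ) (hmin : IsMinimizer d L n m) :
    (volume {x ∈ box d L | -1 + κ ≤ m x ∧ m x ≤ 1 - κ}).toReal * κ^2 * (1 - κ/2)^2 ≤
      Fpot n * L^d ∧
    (κ ≤ 2 - Real.sqrt 2 →
      (volume {x ∈ box d L | -1 + κ ≤ m x ∧ m x ≤ 1 - κ}).toReal ≤
          2 * Fpot n * L^d / κ^2 ∧
        2 * Fpot n * L^d / κ^2 ≤ 2 * δ^2 * L^d / κ^2) := by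
  obtain ⟨⟨hm1, hmper, hmmean⟩, hmval⟩ := hmin
  have hLd : (0:ℝ) < L ^ d := by positivity
  set A : Set (EuclideanSpace ℝ (Fin d)) :=
    {x ∈ box d L | -1 + κ ≤ m x ∧ m x ≤ 1 - κ} with hA
  have hAeq : A = box d L ∩ m ⁻¹' Set.Icc (-1+κ) (1-κ) := rfl
  have hboxm : MeasurableSet (box d L) := box_measurableSet d L
  have hAm : MeasurableSet A := by
    rw [hAeq]
    exact hboxm.inter (measurableSet_Icc.preimage hm1.continuous.measurable)
  have hvolbox : volume (box d L) = ENNReal.ofReal L ^ d := volume_box d L hL.le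
  have hboxfin : volume (box d L) < ⊤ := by
    rw [hvolbox]; exact ENNReal.pow_lt_top ENNReal.ofReal_lt_top
  have hAbox : A ⊆ box d L := fun x hx => hx.1
  have hAfin : volume A ≠ ⊤ := ((measure_mono hAbox).trans_lt hboxfin).ne
  -- integrability
  have hKc := isCompact_closedBox d L
  have hsub : box d L ⊆ {x : EuclideanSpace ℝ (Fin d) | ∀ i, x i ∈ Set.Icc (0:ℝ) L} :=
    fun x hx i => ⟨(hx i).1, (hx i).2.le⟩
  have hfc : Continuous (fderiv ℝ m) := hm1.continuous_fderiv one_ne_zero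
  have hmc := hm1.continuous
  have hg : Continuous fun x => (1/2) * ‖fderiv ℝ m x‖^2 + Fpot (m x) := by
    unfold Fpot; fun_prop
  have hF : Continuous fun x => Fpot (m x) := by unfold Fpot; fun_prop
  have hgint : IntegrableOn (fun x => (1/2) * ‖fderiv ℝ m x‖^2 + Fpot (m x)) (box d L) :=
    (hg.continuousOn.integrableOn_compact hKc).mono_set hsub
  have hFint : IntegrableOn (fun x => Fpot (m x)) (box d L) :=
    (hF.continuousOn.integrableOn_compact hKc).mono_set hsub
  -- lower bound on the transition region
  have h1 : κ^2 * (1-κ/2)^2 * (volume A).toReal ≤ ∫ x in A, Fpot (m x) := by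
    rw [← measureReal_def, mul_comm, ← smul_eq_mul]
    apply setIntegral_ge_of_const_le hAm hAfin
    · intro x hx
      obtain ⟨-, h1, h2⟩ := hx
      unfold Fpot
      have h3 : (m x)^2 ≤ (1-κ)^2 := by nlinarith
      have h5 : 0 ≤ κ*(2-κ) := by nlinarith
      have h4 : κ*(2-κ) ≤ 1 - (m x)^2 := by nlinarith
      have h6 := mul_self_le_mul_self h5 h4
      nlinarith
    · exact hFint.mono_set hAbox
  have h2 : ∫ x in A, Fpot (m x) ≤ ∫ x in box d L, Fpot (m x) :=
    setIntegral_mono_set hFint (Eventually.of_forall fun x => Fpot_nonneg (m x))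
      (HasSubset.Subset.eventuallyLE hAbox)
  have h3 : ∫ x in box d L, Fpot (m x) ≤ FE d L m := by
    unfold FE
    apply integral_mono hFint hgint
    intro x
    have := sq_nonneg ‖fderiv ℝ m x‖
    simp only [Pi.le_def]
    nlinarith
  -- fL ≤ FE of the constant
  have hconstAdm : Adm d L n (fun _ => n) := by
    refine ⟨contDiff_const, fun x i => rfl, ?_⟩
    rw [setIntegral_const, measureReal_def, hvolbox]
    simp only [smul_eq_mul, ENNReal.toReal_pow, ENNReal.toReal_ofReal hL.le]
    field_simp
  have hfLle : fL d L n ≤ Fpot n * L ^ d := by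
    rw [← FE_const d L hL.le n]
    apply csInf_le
    · exact ⟨0, by rintro e ⟨m', _, rfl⟩; exact FE_nonneg d L m'⟩
    · exact ⟨_, hconstAdm, rfl⟩
  have hmain : (volume A).toReal * κ^2 * (1 - κ/2)^2 ≤ Fpot n * L^d := by
    have hc : FE d L m ≤ Fpot n * L ^ d := le_of_eq_of_le hmval hfLle
    nlinarith [h1.trans (h2.trans (h3.trans hc))]
  refine ⟨hmain, fun hκ => ?_⟩
  have hs2 : Real.sqrt 2 ^ 2 = 2 := Real.sq_sqrt (by norm_num)
  have hs0 : 0 ≤ Real.sqrt 2 := Real.sqrt_nonneg 2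
  have hsq : (1:ℝ)/2 ≤ (1 - κ/2)^2 := by nlinarith
  have hvol0 : 0 ≤ (volume A).toReal := ENNReal.toReal_nonneg
  have hκ2 : (0:ℝ) < κ^2 := by positivity
  constructor
  · rw [le_div_iff₀ hκ2]
    nlinarith [mul_le_mul_of_nonneg_left hsq (mul_nonneg hvol0 hκ2.le)]
  · have hFn : Fpot n ≤ δ^2 := by
      unfold Fpot; rw [hn]
      have he : (((-1+δ):ℝ)^2-1)^2 = δ^2*(δ-2)^2 := by ring
      have h7 : (δ-2)^2 ≤ 4 := by nlinarith
      have h8 := mul_le_mul_of_nonneg_left h7 (sq_nonneg δ)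
      linarith
    have hFn0 : 0 ≤ Fpot n := Fpot_nonneg n
    gcongr
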